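/- arXiv:2007.08787 — 4 statements merged into one kernel-verified Lean document; each statement's English description precedes it below -/
import Mathlib

section
/- (Fine–Wilf Periodicity Lemma, Lemma 1 of the paper.) Let X be a string and let a, b be positive integers that are both period lengths of X. If |X| ≥ a + b − gcd(a,b), then gcd(a,b) is also a period length of X. -/
/-- An integer `q ≥ 1` is a period length of a string `X` (given as a list) if
`X[i] = X[i+q]` for all valid positions. The positivity requirement is stated
separately in the theorem. -/
def PeriodLen {α : Type*} (X : List α) (q : ℕ) : Prop :=
  ∀ i, (h : i + q < X.length) → X[i]'(by omega) = X[i + q]'h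

private lemma fw_chain {α : Type*} (X : List α) (g m : ℕ)
    (hm : m ≤ X.length)
    (hp : ∀ p, (h : p + g < m) → X[p]'(by omega) = X[p + g]'(by omega)) :
    ∀ k p, (h : p + k * g < m) → X[p]'(by omega) = X[p + k * g]'(by omega) := by
  intro k
  induction k with
  | zero => intro p h; simp
  | succ k ih =>
    intro p h
    have hkg : (k + 1) * g = k * g + g := by ring
    have h1 : p + k * g + g < m := by omega
    have e1 : X[p]'(by omega) = X[p + k * g]'(by omega) := ih p (by omega)
    have e2 : X[p + k * g]'(by omega) = X[p + k * g + g]'(by omega) := hp (p + k * g) h1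
    rw [e1, e2]
    congr 1
    omega

private lemma fw_aux {α : Type*} : ∀ n (X : List α) (a b : ℕ), a + b ≤ n → 0 < a → 0 < b →
    PeriodLen X a → PeriodLen X b → a + b - Nat.gcd a b ≤ X.length →
    PeriodLen X (Nat.gcd a b) := by
  intro n
  induction n with
  | zero => intro X a b h ha _ _ _ _; omega
  | succ n ih =>
    intro X a b hn ha hb hpa hpb hlen
    have key : ∀ a b, a ≤ n → 0 < a → 0 < b → b < a → PeriodLen X a → PeriodLen X b →
        a + b - Nat.gcd a b ≤ X.length → PeriodLen X (Nat.gcd a b) := by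
      clear hn ha hb hpa hpb hlen a b
      intro a b han ha hb hab hpa hpb hlen
      have hgdvda : Nat.gcd a b ∣ a := Nat.gcd_dvd_left a b
      have hgdvdb : Nat.gcd a b ∣ b := Nat.gcd_dvd_right a b
      have hgpos : 0 < Nat.gcd a b := Nat.gcd_pos_of_pos_left _ ha
      set g := Nat.gcd a b with hg
      have hgab : Nat.gcd (a - b) b = g := Nat.gcd_sub_self_left (le_of_lt hab)
      have hglesub : g ≤ a - b := Nat.le_of_dvd (by omega) (Nat.dvd_sub hgdvda hgdvdb)
      have hgleb : g ≤ b := Nat.le_of_dvd hb hgdvdb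
      have hlenb : b ≤ X.length := by omega
      set m := X.length - b with hm
      have hmle : m ≤ X.length := by omega
      have hmb : b ≤ m := by omega
      set Y := X.take m with hY
      have hYlen : Y.length = m := by
        simp [hY]; omega
      have hYget : ∀ i (h : i < Y.length), Y[i]'h = X[i]'(by rw [hYlen] at h; omega) := by
        intro i h
        simp [hY, List.getElem_take]
      have hYa : PeriodLen Y (a - b) := by
        intro i hi
        have hi' : i + (a - b) < m := by rw [hYlen] at hi; exact hi
        have h1 : i + a < X.length := by omega
        have e1 : X[i]'(by omega) = X[i + a]'h1 := hpa i h1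
        have e2 : X[i + (a - b)]'(by omega) = X[i + (a - b) + b]'(by omega) :=
          hpb (i + (a - b)) (by omega)
        have e3 : X[i + (a - b) + b]'(by omega) = X[i + a]'h1 := by congr 1; omega
        rw [hYget, hYget, e1, ← e3, ← e2]
      have hYb : PeriodLen Y b := by
        intro i hi
        have hi' : i + b < m := by rw [hYlen] at hi; exact hi
        have e := hpb i (by omega)
        rw [hYget, hYget]
        exact e
      have hYg : PeriodLen Y g := by
        rw [← hgab]
        refine ih Y (a - b) b (by omega) (by omega) hb hYa hYb ?_
        rw [hgab, hYlen]; omega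
      -- prefix period on X
      have hpX : ∀ p, (h : p + g < m) → X[p]'(by omega) = X[p + g]'(by omega) := by
        intro p hp
        have hYv : p + g < Y.length := by rw [hYlen]; omega
        have := hYg p hYv
        rwa [hYget, hYget] at this
      -- extension
      intro i hig
      by_cases hcase : i + g < m
      · exact hpX i hcase
      · -- i + g ≥ m, hence i + g ≥ b
        have higb : b ≤ i + g := by omega
        have hXlen : X.length = m + b := by omega
        by_cases hi : i < m
        · -- chain from j = i + g - b up to i
          obtain ⟨k, hk⟩ : g ∣ b - g := Nat.dvd_sub hgdvdb dvd_rfl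
          have hk2 : k * g = b - g := by rw [Nat.mul_comm]; omega
          have c1 : X[i + g - b]'(by omega) = X[(i + g - b) + k * g]'(by omega) :=
            fw_chain X g m hmle hpX k (i + g - b) (by omega)
          have c2 : X[(i + g - b) + k * g]'(by omega) = X[i]'(by omega) := by congr 1; omega
          have c3 : X[i + g - b]'(by omega) = X[(i + g - b) + b]'(by omega) :=
            hpb (i + g - b) (by omega)
          have c4 : X[(i + g - b) + b]'(by omega) = X[i + g]'hig := by congr 1; omega
          rw [← c2, ← c1, c3, c4]
        · -- i ≥ m ≥ b
          have c1 : X[i - b]'(by omega) = X[(i - b) + b]'(by omega) := hpb (i - b) (by omega)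
          have c2 : X[(i - b) + b]'(by omega) = X[i]'(by omega) := by congr 1; omega
          have c3 : X[i - b]'(by omega) = X[(i - b) + g]'(by omega) := hpX (i - b) (by omega)
          have c4 : X[i + g - b]'(by omega) = X[(i + g - b) + b]'(by omega) :=
            hpb (i + g - b) (by omega)
          have c5 : X[(i + g - b) + b]'(by omega) = X[i + g]'hig := by congr 1; omega
          have c6 : X[(i - b) + g]'(by omega) = X[i + g - b]'(by omega) := by congr 1; omega
          rw [← c2, ← c1, c3, c6, c4, c5]
    rcases lt_trichotomy a b with hab | hab | hab
    · rw [Nat.gcd_comm]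
      exact key b a (by omega) hb ha hab hpb hpa (by rw [Nat.gcd_comm b a]; omega)
    · subst hab
      simpa [Nat.gcd_self] using hpa
    · exact key a b (by omega) ha hb hab hpa hpb hlen

/-- **Fine–Wilf Periodicity Lemma.** If `a` and `b` are positive period lengths of `X`
and `|X| ≥ a + b − gcd(a,b)`, then `gcd(a,b)` is also a period length of `X`. -/
theorem fine_wilf_periodicity {α : Type*} (X : List α) (a b : ℕ)
    (ha : 0 < a) (hb : 0 < b)
    (hpa : PeriodLen X a) (hpb : PeriodLen X b)
    (hlen : a + b - Nat.gcd a b ≤ X.length) :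
    PeriodLen X (Nat.gcd a b) := by
  exact fw_aux (a + b) X a b le_rfl ha hb hpa hpb hlen
end

section
/- (Key claim in the proof of Theorem 4 of the paper.) Let S = p^k p' be a string of length n whose smallest period is p, where p' is a (possibly empty) proper prefix of p and k > 3. Then there is no nonempty string q with |q| < |p| such that q^{⌊n/|q|⌋ − 1} is a substring of S. -/
/-- A string `p` is a period of a string `S` if `S = p^k p'` for some integer `k ≥ 1`
and some (possibly empty) prefix `p'` of `p`. -/
def IsPeriodOf {α : Type*} (p S : List α) : Prop :=
  ∃ k : ℕ, 1 ≤ k ∧ ∃ p' : List α, p' <+: p ∧ S = (List.replicate k p).flatten ++ p'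

/-- `p` is a smallest period of `S`. -/
def SmallestPeriod {α : Type*} (p S : List α) : Prop :=
  IsPeriodOf p S ∧ ∀ q : List α, IsPeriodOf q S → p.length ≤ q.length

section Aux

variable {α : Type*}

lemma getElem_idx_congr {l : List α} {i j : ℕ} (h : i = j) (hi : i < l.length) :
    l[i]'hi = l[j]'(h ▸ hi) := by subst h; rfl

lemma getElem_list_congr {l l' : List α} (h : l = l') {i : ℕ} (hi : i < l.length) :
    l[i]'hi = l'[i]'(h ▸ hi) := by subst h; rfl

lemma flat_rep_length (k : ℕ) (t : List α) :
    ((List.replicate k t).flatten).length = k * t.length := by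
  induction k with
  | zero => simp
  | succ k ih => simp [List.replicate_succ, ih, Nat.succ_mul]; ring

lemma flat_rep_getElem (t : List α) (ht : 0 < t.length) :
    ∀ (k i : ℕ) (h : i < k * t.length),
      ((List.replicate k t).flatten)[i]'(by rw [flat_rep_length]; exact h) =
        t[i % t.length]'(Nat.mod_lt _ ht) := by
  intro k
  induction k with
  | zero => intro i h; exact absurd h (by omega)
  | succ k ih =>
    intro i h
    have hs : (k + 1) * t.length = k * t.length + t.length := by ring
    rw [getElem_list_congr
      (show (List.replicate (k + 1) t).flatten = t ++ (List.replicate k t).flatten from by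
        rw [List.replicate_succ, List.flatten_cons])]
    by_cases hi : i < t.length
    · rw [List.getElem_append_left hi]
      exact getElem_idx_congr (Nat.mod_eq_of_lt hi).symm hi
    · rw [List.getElem_append_right (le_of_not_gt hi)]
      rw [ih (i - t.length) (by omega)]
      exact getElem_idx_congr (Nat.mod_eq_sub_mod (le_of_not_gt hi)).symm _

lemma period_getElem (p p' S : List α) (k : ℕ) (hp' : p' <+: p) (hP : 0 < p.length)
    (hproper : p'.length < p.length)
    (hS : S = (List.replicate k p).flatten ++ p') (i : ℕ) (hi : i < S.length) :
    S[i] = p[i % p.length]'(Nat.mod_lt _ hP) := by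
  subst hS
  have hlen : ((List.replicate k p).flatten).length = k * p.length := flat_rep_length k p
  have hi' : i < k * p.length + p'.length := by
    simpa [hlen] using hi
  by_cases h : i < k * p.length
  · rw [List.getElem_append_left (by rw [hlen]; exact h)]
    exact flat_rep_getElem p hP k i h
  · rw [List.getElem_append_right (show ((List.replicate k p).flatten).length ≤ i from by
      rw [hlen]; omega)]
    rw [getElem_idx_congr
      (show i - ((List.replicate k p).flatten).length = i - k * p.length from by rw [hlen])]
    rw [List.IsPrefix.getElem hp' (show i - k * p.length < p'.length from by omega)]
    refine getElem_idx_congr ?_ _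
    have hrep : i = (i - k * p.length) + k * p.length := by omega
    conv_rhs => rw [hrep]
    rw [Nat.add_mul_mod_self_right, Nat.mod_eq_of_lt (show i - k * p.length < p.length from by omega)]

lemma build_period (S : List α) (ℓ : ℕ) (h0 : 0 < ℓ) (hn : ℓ ≤ S.length)
    (h : ∀ i (hi : i < S.length), S[i] = S[i % ℓ]'(lt_of_lt_of_le (Nat.mod_lt _ h0) hn)) :
    IsPeriodOf (S.take ℓ) S := by
  have hmod : S.length % ℓ < ℓ := Nat.mod_lt _ h0
  have hdm : (S.length / ℓ) * ℓ + S.length % ℓ = S.length := by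
    rw [Nat.mul_comm]; exact Nat.div_add_mod S.length ℓ
  have hlt : (S.take ℓ).length = ℓ := by
    rw [List.length_take, min_eq_left hn]
  refine ⟨S.length / ℓ, (Nat.one_le_div_iff h0).mpr hn, S.take (S.length % ℓ), ?_, ?_⟩
  · have : S.take (S.length % ℓ) = (S.take ℓ).take (S.length % ℓ) := by
      rw [List.take_take, min_eq_left (le_of_lt hmod)]
    rw [this]
    exact List.take_prefix _ _
  · refine (List.ext_getElem ?_ ?_).symm
    · simp only [List.length_append, flat_rep_length, hlt, List.length_take]
      omega
    · intro i h1 h2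
      have hflen : ((List.replicate (S.length / ℓ) (S.take ℓ)).flatten).length
          = (S.length / ℓ) * ℓ := by rw [flat_rep_length, hlt]
      by_cases hc : i < (S.length / ℓ) * ℓ
      · rw [List.getElem_append_left (by rw [hflen]; exact hc)]
        rw [flat_rep_getElem (S.take ℓ) (by omega) _ i (by rw [hlt]; exact hc)]
        rw [List.getElem_take]
        rw [getElem_idx_congr (show i % (S.take ℓ).length = i % ℓ from by rw [hlt])]
        exact (h i h2).symm
      · rw [List.getElem_append_right (by rw [hflen]; omega)]
        rw [List.getElem_take]
        rw [getElem_idx_congr (show i - ((List.replicate (S.length / ℓ) (S.take ℓ)).flatten).length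
            = i - (S.length / ℓ) * ℓ from by rw [hflen])]
        rw [h i h2]
        refine (getElem_idx_congr ?_ _).symm
        have hrep : i = (i - S.length / ℓ * ℓ) + (S.length / ℓ) * ℓ := by omega
        conv_lhs => rw [hrep]
        rw [Nat.add_mul_mod_self_right, Nat.mod_eq_of_lt (show i - S.length / ℓ * ℓ < ℓ from by omega)]

lemma exists_rep (a P x : ℕ) (hP : 0 < P) : ∃ w, a ≤ w ∧ w < a + P ∧ w % P = x % P := by
  have hdm : P * (a / P) + a % P = a := Nat.div_add_mod a P
  have haP : a % P < P := Nat.mod_lt _ hP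
  have hxP : x % P < P := Nat.mod_lt _ hP
  by_cases h : a % P ≤ x % P
  · refine ⟨P * (a / P) + x % P, by omega, by omega, ?_⟩
    rw [Nat.mul_add_mod, Nat.mod_eq_of_lt hxP]
  · refine ⟨P * (a / P) + P + x % P, by omega, by omega, ?_⟩
    have : P * (a / P) + P + x % P = P * (a / P + 1) + x % P := by ring
    rw [this, Nat.mul_add_mod, Nat.mod_eq_of_lt hxP]

end Aux

/-- **Key claim in the proof of Theorem 4.** If `S = p^k p'` has smallest period `p`,
with `p'` a proper prefix of `p` and `k > 3`, then there is no nonempty string `q`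
with `|q| < |p|` such that `q^{⌊n/|q|⌋ − 1}` is a substring of `S`, where `n = |S|`. -/
theorem no_short_candidate_period {α : Type*} (p p' S : List α) (k : ℕ)
    (hk : 3 < k) (hp' : p' <+: p) (hproper : p'.length < p.length)
    (hS : S = (List.replicate k p).flatten ++ p')
    (hsmall : SmallestPeriod p S) :
    ¬ ∃ q : List α, q ≠ [] ∧ q.length < p.length ∧
        (List.replicate (S.length / q.length - 1) q).flatten <:+: S := by
  rintro ⟨q, hq, hql, u, v, huv⟩
  have hP : 0 < p.length := by omega
  have hl : 0 < q.length := List.length_pos_iff.mpr hq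
  have hn : S.length = k * p.length + p'.length := by
    rw [hS]; simp [flat_rep_length]
  have h4P : 4 * p.length ≤ k * p.length := Nat.mul_le_mul_right p.length (by omega)
  have hln : q.length ≤ S.length := by omega
  have hdm : (S.length / q.length) * q.length + S.length % q.length = S.length := by
    rw [Nat.mul_comm]; exact Nat.div_add_mod S.length q.length
  have hmodl : S.length % q.length < q.length := Nat.mod_lt _ hl
  have hdiv1 : 1 ≤ S.length / q.length := (Nat.one_le_div_iff hl).mpr hln
  have hml : S.length ≤ (S.length / q.length - 1) * q.length + 2 * q.length - 1 := by
    have h' : (S.length / q.length - 1) * q.length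
        = (S.length / q.length) * q.length - 1 * q.length := by rw [← Nat.sub_mul]
    omega
  have h2P : 2 * p.length + 2 ≤ (S.length / q.length - 1) * q.length := by omega
  have hTlen : ((List.replicate (S.length / q.length - 1) q).flatten).length
      = (S.length / q.length - 1) * q.length := flat_rep_length _ q
  have hwin : u.length + (S.length / q.length - 1) * q.length + v.length = S.length := by
    have h' := congrArg List.length huv
    simp only [List.length_append, hTlen] at h'
    omega
  -- index formula for S
  have hidx : ∀ i (hi : i < S.length), S[i] = p[i % p.length]'(Nat.mod_lt _ hP) :=
    period_getElem p p' S k hp' hP hproper hS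
  -- local period q.length on the window
  have hwinper : ∀ w, u.length ≤ w →
      w + q.length < u.length + (S.length / q.length - 1) * q.length →
      ∀ (h1 : w < S.length) (h2 : w + q.length < S.length), S[w]'h1 = S[w + q.length]'h2 := by
    intro w hw1 hw2 h1 h2
    have e : ∀ (z : ℕ) (hz1 : u.length ≤ z)
        (hz2 : z < u.length + (S.length / q.length - 1) * q.length) (hz : z < S.length),
        S[z]'hz = q[(z - u.length) % q.length]'(Nat.mod_lt _ hl) := by
      intro z hz1 hz2 hz
      rw [getElem_list_congr huv.symm]
      rw [List.getElem_append_left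
        (show z < (u ++ (List.replicate (S.length / q.length - 1) q).flatten).length from by
          simp only [List.length_append, hTlen]; omega)]
      rw [List.getElem_append_right hz1]
      exact flat_rep_getElem q hl _ (z - u.length) (by omega)
    rw [e w hw1 (by omega) h1, e (w + q.length) (by omega) hw2 h2]
    refine getElem_idx_congr ?_ _
    have h' : w + q.length - u.length = (w - u.length) + q.length := by omega
    rw [h', Nat.add_mod_right]
  -- step: S has local period q.length everywhere
  have hstep : ∀ x (hx : x + q.length < S.length),
      S[x]'(by omega) = S[x + q.length]'hx := by
    intro x hx
    obtain ⟨w, hw1, hw2, hw3⟩ := exists_rep u.length p.length x hP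
    have hwn1 : w < S.length := by omega
    have hwn2 : w + q.length < S.length := by omega
    have hwwin : w + q.length < u.length + (S.length / q.length - 1) * q.length := by omega
    have e1 : S[x]'(by omega) = S[w]'hwn1 := by
      rw [hidx x (by omega), hidx w hwn1]
      exact getElem_idx_congr hw3.symm _
    have e2 : S[x + q.length]'hx = S[w + q.length]'hwn2 := by
      rw [hidx (x + q.length) hx, hidx (w + q.length) hwn2]
      refine getElem_idx_congr ?_ _
      rw [Nat.add_mod x q.length p.length, Nat.add_mod w q.length p.length, hw3]
    rw [e1, e2]
    exact hwinper w hw1 hwwin hwn1 hwn2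
  -- therefore S[i] = S[i % q.length]
  have hmodS : ∀ i (hi : i < S.length),
      S[i]'hi = S[i % q.length]'(lt_of_lt_of_le (Nat.mod_lt _ hl) hln) := by
    intro i
    induction i using Nat.strong_induction_on with
    | _ i ih =>
      intro hi
      by_cases h : i < q.length
      · exact getElem_idx_congr (Nat.mod_eq_of_lt h).symm _
      · have h1 : i - q.length + q.length = i := by omega
        have hst : S[i - q.length]'(by omega) = S[i]'hi :=
          (hstep (i - q.length) (by omega)).trans (getElem_idx_congr h1 _)
        rw [← hst, ih (i - q.length) (by omega) (by omega)]
        exact getElem_idx_congr (Nat.mod_eq_sub_mod (by omega)).symm _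
  have hper : IsPeriodOf (S.take q.length) S := build_period S q.length hl hln hmodS
  have hfin := hsmall.2 (S.take q.length) hper
  rw [List.length_take, min_eq_left hln] at hfin
  omega
end

section
/- (Lemma 7 of the paper.) Let p be a nonempty string, let S' = p^k p' with k ≥ 1 and p' a (possibly empty) prefix of p, and let S be a string with |S| = |S'| and Hamming distance δ(S, S') ≤ d. Let A be any substring of S of length (2d+1)|p|, written as the concatenation A = q₁ q₂ ⋯ q_{2d+1} of consecutive blocks each of length |p|. Then there is exactly one string that occurs at least d+1 times among q₁, …, q_{2d+1}, and this string is a cyclic rotation of p. -/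
/-- Hamming distance between two strings of equal length: the number of positions at
which they differ. -/
def listHammingDist {α : Type*} [DecidableEq α] (X Y : List α) : ℕ :=
  ((X.zip Y).filter (fun ab => decide (ab.1 ≠ ab.2))).length

/-- The `i`-th consecutive block of length `m` of a string `A` (0-indexed). -/
def blockAt {α : Type*} (A : List α) (m i : ℕ) : List α :=
  (A.drop (i * m)).take m

/- Auxiliary lemmas -/

lemma hd_append {α : Type*} [DecidableEq α] (X Y X' Y' : List α)
    (h : X.length = X'.length) :
    listHammingDist (X ++ Y) (X' ++ Y') = listHammingDist X X' + listHammingDist Y Y' := by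
  unfold listHammingDist
  rw [List.zip_append h, List.filter_append, List.length_append]

lemma hd_pos {α : Type*} [DecidableEq α] :
    ∀ (X Y : List α), X.length = Y.length → X ≠ Y → 1 ≤ listHammingDist X Y := by
  intro X
  induction X with
  | nil => intro Y h hne; cases Y <;> simp_all
  | cons a X ih =>
    intro Y h hne
    cases Y with
    | nil => simp at h
    | cons b Y =>
      unfold listHammingDist at *
      simp only [List.zip_cons_cons, List.filter_cons]
      by_cases hab : a = b
      · subst hab
        have hne' : X ≠ Y := fun hXY => hne (by rw [hXY])
        have := ih Y (by simpa using h) hne'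
        simpa using this
      · simp [hab]

lemma blockAt_succ {α : Type*} (A : List α) (m i : ℕ) :
    blockAt A m (i + 1) = blockAt (A.drop m) m i := by
  unfold blockAt
  rw [List.drop_drop]
  ring_nf

lemma hamming_blocks {α : Type*} [DecidableEq α] (m : ℕ) :
    ∀ (n : ℕ) (X Y : List α), X.length = n * m → Y.length = n * m →
      listHammingDist X Y =
        ((List.range n).map
          (fun i => listHammingDist (blockAt X m i) (blockAt Y m i))).sum := by
  intro n
  induction n with
  | zero =>
    intro X Y hX hY
    have : X = [] := List.length_eq_zero_iff.mp (by simpa using hX)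
    have : Y = [] := List.length_eq_zero_iff.mp (by simpa using hY)
    subst this; subst ‹X = []›
    simp [listHammingDist]
  | succ n ih =>
    intro X Y hX hY
    have hXd : X = X.take m ++ X.drop m := (List.take_append_drop m X).symm
    have hYd : Y = Y.take m ++ Y.drop m := (List.take_append_drop m Y).symm
    have hmX : m ≤ X.length := by rw [hX]; nlinarith [Nat.succ_mul n m]
    have hmY : m ≤ Y.length := by rw [hY]; nlinarith [Nat.succ_mul n m]
    have h1 : listHammingDist X Y =
        listHammingDist (X.take m) (Y.take m) + listHammingDist (X.drop m) (Y.drop m) := by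
      conv_lhs => rw [hXd, hYd]
      exact hd_append _ _ _ _ (by rw [List.length_take, List.length_take]; omega)
    have hXdl : (X.drop m).length = n * m := by
      rw [List.length_drop, hX]; rw [Nat.succ_mul]; omega
    have hYdl : (Y.drop m).length = n * m := by
      rw [List.length_drop, hY]; rw [Nat.succ_mul]; omega
    rw [h1, ih _ _ hXdl hYdl, List.range_succ_eq_map]
    simp only [List.map_cons, List.sum_cons, List.map_map]
    congr 1
    · unfold blockAt; simp
    · congr 1
      apply List.map_congr_left
      intro i _
      simp only [Function.comp_apply, Nat.succ_eq_add_one]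
      rw [blockAt_succ, blockAt_succ]

lemma countP_le_sum {β : Type*} (l : List β) (P : β → Bool) (f : β → ℕ)
    (h : ∀ x ∈ l, P x = true → 1 ≤ f x) : l.countP P ≤ (l.map f).sum := by
  induction l with
  | nil => simp
  | cons a l ih =>
    rw [List.countP_cons]
    simp only [List.map_cons, List.sum_cons]
    have := ih (fun x hx => h x (List.mem_cons_of_mem a hx))
    split
    · have := h a List.mem_cons_self (by assumption)
      omega
    · omega

lemma rep_seg {α : Type*} (p : List α) (hp : p ≠ []) :
    ∀ (N s : ℕ), s + p.length ≤ N * p.length →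
      (((List.replicate N p).flatten.drop s).take p.length) = p.rotate (s % p.length) := by
  have hm : 0 < p.length := List.length_pos_iff.mpr hp
  intro N
  induction N with
  | zero => intro s hs; rw [Nat.zero_mul] at hs; omega
  | succ N ih =>
    intro s hs
    rw [List.replicate_succ, List.flatten_cons]
    by_cases hsm : p.length ≤ s
    · rw [List.drop_append]
      have h1 : s - p.length + p.length ≤ N * p.length := by
        rw [Nat.succ_mul] at hs; omega
      have h2 : List.drop s p = [] := List.drop_eq_nil_of_le (by omega)
      rw [h2, List.nil_append, ih _ h1, Nat.mod_eq_sub_mod hsm]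
    · push_neg at hsm
      have hsmod : s % p.length = s := Nat.mod_eq_of_lt hsm
      rw [List.drop_append]
      have h2 : s - p.length = 0 := by omega
      rw [h2, List.drop_zero, List.take_append]
      have h3 : List.take p.length (List.drop s p) = List.drop s p := by
        rw [List.take_of_length_le]; rw [List.length_drop]; omega
      have h4 : p.length - (List.drop s p).length = s := by
        rw [List.length_drop]; omega
      rw [h3, h4, hsmod]
      by_cases hs0 : s = 0
      · subst hs0
        simp
      · have hN : 1 ≤ N := by
          by_contra hN
          have : N = 0 := by omega
          subst this
          simp at hs
          omega
        obtain ⟨N', rfl⟩ : ∃ N', N = N' + 1 := ⟨N - 1, by omega⟩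
        rw [List.replicate_succ, List.flatten_cons,
          List.take_append_of_le_length (by omega),
          ← List.rotate_eq_drop_append_take (by omega)]

lemma prefix_seg {α : Type*} (X T : List α) (h : X <+: T) (s m : ℕ)
    (hs : s + m ≤ X.length) : (X.drop s).take m = (T.drop s).take m := by
  obtain ⟨r, rfl⟩ := h
  rw [List.drop_append, List.take_append_of_le_length]
  rw [List.length_drop]; omega

/-- **Lemma 7.** Let `S' = p^k p'` with `k ≥ 1` and `p'` a prefix of the nonempty
string `p`, and let `S` satisfy `|S| = |S'|` and `δ(S, S') ≤ d`. Let `A` be any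
substring of `S` of length `(2d+1)|p|`, viewed as the concatenation of `2d+1`
consecutive blocks of length `|p|`. Then there is exactly one string occurring at
least `d+1` times among the blocks, and it is a cyclic rotation of `p`. -/
theorem corrupted_majority_block {α : Type*} [DecidableEq α]
    (p p' S S' A : List α) (k d : ℕ)
    (hp : p ≠ []) (hk : 1 ≤ k) (hp' : p' <+: p)
    (hS' : S' = (List.replicate k p).flatten ++ p')
    (hlen : S.length = S'.length)
    (hdist : listHammingDist S S' ≤ d)
    (hA : A <:+: S) (hAlen : A.length = (2 * d + 1) * p.length) :
    ∃ w : List α, (∃ j < p.length, w = p.rotate j) ∧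
      d + 1 ≤ (List.range (2 * d + 1)).countP
          (fun i => decide (blockAt A p.length i = w)) ∧
      ∀ w' : List α,
        d + 1 ≤ (List.range (2 * d + 1)).countP
            (fun i => decide (blockAt A p.length i = w')) → w' = w := by
  set m := p.length with hm_def
  have hm : 0 < m := List.length_pos_iff.mpr hp
  obtain ⟨u, v, huv⟩ := hA
  set t := u.length with ht_def
  -- length facts
  have hSlen : S.length = t + A.length + v.length := by
    rw [← huv]; simp; omega
  have htL : t + A.length ≤ S'.length := by omega
  -- S' is a prefix of (k+1) copies of p
  have hpre : S' <+: (List.replicate (k + 1) p).flatten := by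
    rw [hS', List.replicate_succ' (n := k), List.flatten_append]
    obtain ⟨r, hr⟩ := hp'
    exact ⟨r, by simp [← hr]⟩
  -- the comparison string
  set A' : List α := (S'.drop t).take A.length with hA'_def
  have hA'len : A'.length = A.length := by
    rw [hA'_def, List.length_take, List.length_drop]; omega
  -- each block of A' is the rotation w
  set w : List α := p.rotate (t % m) with hw_def
  have hwlen : w.length = m := by rw [hw_def, List.length_rotate]
  have hblock' : ∀ i < 2 * d + 1, blockAt A' m i = w := by
    intro i hi
    have him : i * m + m ≤ A.length := by
      rw [hAlen]; nlinarith
    have h1 : blockAt A' m i = (S'.drop (t + i * m)).take m := by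
      rw [hA'_def]
      unfold blockAt
      rw [List.drop_take, List.take_take, min_eq_left (by omega), List.drop_drop]
    rw [h1]
    have h2 : t + i * m + m ≤ S'.length := by omega
    rw [prefix_seg S' _ hpre _ _ h2]
    have h3 : t + i * m + m ≤ (k + 1) * m := by
      have : S'.length ≤ (k + 1) * m := by
        rw [hS']
        simp only [List.length_append, List.length_flatten]
        have : (List.map List.length (List.replicate k p)).sum = k * m := by
          simp [List.map_replicate, hm_def]
        rw [Nat.succ_mul]
        have := hp'.length_le
        omega
      omega
    rw [rep_seg p hp (k + 1) _ h3, hw_def, Nat.add_mul_mod_self_right]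
  -- the Hamming distance between A and A' is at most d
  have hAA' : listHammingDist A A' ≤ d := by
    have hdecS' : S' = S'.take t ++ (A' ++ S'.drop (t + A.length)) := by
      rw [hA'_def]
      rw [← List.drop_drop]
      rw [List.take_append_drop, List.take_append_drop]
    have hdecS : S = u ++ (A ++ v) := by rw [← huv]; simp
    have := hdist
    rw [hdecS, hdecS'] at this
    rw [hd_append _ _ _ _ (by rw [List.length_take]; omega)] at this
    rw [hd_append _ _ _ _ (by omega)] at this
    omega
  -- block lengths
  have hblocklen : ∀ i < 2 * d + 1, (blockAt A m i).length = m := by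
    intro i hi
    unfold blockAt
    rw [List.length_take, List.length_drop, hAlen]
    have : i * m + m ≤ (2 * d + 1) * m := by nlinarith
    omega
  -- count of bad blocks is at most d
  have hbad : (List.range (2 * d + 1)).countP
      (fun i => decide (blockAt A m i ≠ w)) ≤ d := by
    have hsum : listHammingDist A A' =
        ((List.range (2 * d + 1)).map
          (fun i => listHammingDist (blockAt A m i) (blockAt A' m i))).sum := by
      exact hamming_blocks m (2 * d + 1) A A' (by omega) (by omega)
    have hle : (List.range (2 * d + 1)).countP (fun i => decide (blockAt A m i ≠ w)) ≤
        ((List.range (2 * d + 1)).map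
          (fun i => listHammingDist (blockAt A m i) (blockAt A' m i))).sum := by
      apply countP_le_sum
      intro i hi hPi
      have hi' : i < 2 * d + 1 := List.mem_range.mp hi
      rw [hblock' i hi']
      apply hd_pos
      · rw [hblocklen i hi', hwlen]
      · simpa using hPi
    omega
  -- count of good blocks is at least d + 1
  have hgood : d + 1 ≤ (List.range (2 * d + 1)).countP
      (fun i => decide (blockAt A m i = w)) := by
    have := List.length_eq_countP_add_countP (fun i => decide (blockAt A m i = w))
      (l := List.range (2 * d + 1))
    rw [List.length_range] at this
    have heq : (List.range (2 * d + 1)).countP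
        (fun a => decide ¬(decide (blockAt A m a = w)) = true) =
        (List.range (2 * d + 1)).countP (fun i => decide (blockAt A m i ≠ w)) := by
      apply List.countP_congr
      intro x _
      simp
    omega
  refine ⟨w, ⟨t % m, Nat.mod_lt _ hm, rfl⟩, hgood, ?_⟩
  intro w' hw'
  by_contra hne
  have : (List.range (2 * d + 1)).countP (fun i => decide (blockAt A m i = w')) ≤
      (List.range (2 * d + 1)).countP (fun i => decide (blockAt A m i ≠ w)) := by
    apply List.countP_mono_left
    intro x _ hx
    simp only [decide_eq_true_eq] at hx ⊢
    rw [hx]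
    exact hne
  omega
end

section
/- (Theorem 13 of the paper.) For every integer b ≥ 1, consider the two binary strings of length n = 4b + 14 given by S₁ = 101101·(10)^b·01·(10)^b·010010 and S₂ = 101101·(10)^b·10·(10)^b·010010. For all natural numbers k and l, let Mᵢ(k,l) be the set of starting positions j (1 ≤ j ≤ n − (k+l) + 1) such that the length-(k+l) substring of Sᵢ starting at position j contains exactly k ones and l zeros. Then for every pair (k,l), either M₁(k,l) and M₂(k,l) are both empty, or M₁(k,l) ∩ M₂(k,l) is nonempty. (Hence S₁ and S₂ cannot be distinguished by adversarial jumbled-indexing queries.) -/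
set_option maxHeartbeats 1600000

/-- The first string of Theorem 13: `S₁ = 101101·(10)^b·01·(10)^b·010010`,
with `true` playing the role of `1` and `false` the role of `0`. -/
def S₁ (b : ℕ) : List Bool :=
  [true, false, true, true, false, true] ++ (List.replicate b [true, false]).flatten ++
    [false, true] ++ (List.replicate b [true, false]).flatten ++
    [false, true, false, false, true, false]

/-- The second string of Theorem 13: `S₂ = 101101·(10)^b·10·(10)^b·010010`. -/
def S₂ (b : ℕ) : List Bool :=
  [true, false, true, true, false, true] ++ (List.replicate b [true, false]).flatten ++
    [true, false] ++ (List.replicate b [true, false]).flatten ++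
    [false, true, false, false, true, false]

/-- `M S k l` is the set of (0-indexed) starting positions `j` such that the
length-`(k+l)` substring of `S` starting at position `j` contains exactly `k` ones
and `l` zeros. -/
def M (S : List Bool) (k l : ℕ) : Set ℕ :=
  {j | j + (k + l) ≤ S.length ∧
    ((S.drop j).take (k + l)).count true = k ∧
    ((S.drop j).take (k + l)).count false = l}

/-- Closed form for the number of `true`s in the length-`j` prefix of `S₁ b`. -/
def F₁ (b j : ℕ) : ℕ :=
  min j 1 + min (j - 2) 2 + min (j - 5) 1 + min ((j - 6 + 1) / 2) b +
    min (j - (6 + 2 * b) - 1) 1 + min ((j - (6 + 2 * b + 2) + 1) / 2) b +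
    (min (j - (6 + 2 * b + 2 + 2 * b) - 1) 1 + min (j - (6 + 2 * b + 2 + 2 * b) - 4) 1)

/-- Closed form for the number of `true`s in the length-`j` prefix of `S₂ b`. -/
def F₂ (b j : ℕ) : ℕ :=
  min j 1 + min (j - 2) 2 + min (j - 5) 1 + min ((j - 6 + 1) / 2) b +
    min (j - (6 + 2 * b)) 1 + min ((j - (6 + 2 * b + 2) + 1) / 2) b +
    (min (j - (6 + 2 * b + 2 + 2 * b) - 1) 1 + min (j - (6 + 2 * b + 2 + 2 * b) - 4) 1)

lemma flat_len (b : ℕ) : ((List.replicate b [true, false]).flatten).length = 2 * b := by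
  induction b with
  | zero => simp
  | succ b ih => simp [List.replicate_succ, ih]; ring

lemma flat_take_count (b i : ℕ) :
    (((List.replicate b [true, false]).flatten).take i).count true = min ((i + 1) / 2) b := by
  induction b generalizing i with
  | zero => simp
  | succ b ih =>
    rw [List.replicate_succ]
    match i with
    | 0 => simp
    | 1 => simp
    | (i + 2) =>
      simp [List.count_cons, ih i]
      omega

lemma count_take_lit6 (j : ℕ) :
    (([true, false, true, true, false, true] : List Bool).take j).count true
      = min j 1 + min (j - 2) 2 + min (j - 5) 1 := by
  match j with
  | 0 => decide
  | 1 => decide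
  | 2 => decide
  | 3 => decide
  | 4 => decide
  | 5 => decide
  | (j + 6) =>
    rw [List.take_of_length_le (by simp)]
    simp; all_goals omega

lemma count_take_lit01 (j : ℕ) :
    (([false, true] : List Bool).take j).count true = min (j - 1) 1 := by
  match j with
  | 0 => decide
  | 1 => decide
  | (j + 2) => rw [List.take_of_length_le (by simp)]; simp; all_goals omega

lemma count_take_lit10 (j : ℕ) :
    (([true, false] : List Bool).take j).count true = min j 1 := by
  match j with
  | 0 => decide
  | 1 => decide
  | (j + 2) => rw [List.take_of_length_le (by simp)]; simp; all_goals omega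

lemma count_take_tail (j : ℕ) :
    (([false, true, false, false, true, false] : List Bool).take j).count true
      = min (j - 1) 1 + min (j - 4) 1 := by
  match j with
  | 0 => decide
  | 1 => decide
  | 2 => decide
  | 3 => decide
  | 4 => decide
  | 5 => decide
  | (j + 6) => rw [List.take_of_length_le (by simp)]; simp; all_goals omega

lemma len_S₁ (b : ℕ) : (S₁ b).length = 4*b+14 := by
  simp [S₁, flat_len]; ring

lemma len_S₂ (b : ℕ) : (S₂ b).length = 4*b+14 := by
  simp [S₂, flat_len]; ring

lemma Feq (b x : ℕ) (hx : x ≠ 7+2*b) : F₁ b x = F₂ b x := by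
  unfold F₁ F₂
  have h : min (x - (6 + 2 * b) - 1) 1 = min (x - (6 + 2 * b)) 1 := by omega
  rw [h]

lemma L2 (b : ℕ) : F₁ b (7+2*b) = 4+b := by
  unfold F₁; omega

lemma L2' (b : ℕ) : F₂ b (7+2*b) = 5+b := by
  unfold F₂; omega

lemma L01 (b x : ℕ) (hx : x ≤ 6+2*b) :
    F₁ b x = min x 1 + min (x - 2) 2 + min (x - 5) 1 + (x-5)/2 := by
  unfold F₁; omega

lemma L34 (b x : ℕ) (h1 : 8+2*b ≤ x) (h2 : x ≤ 14+4*b) :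
    F₁ b x = 5 + b + min ((x-7-2*b)/2) b + (x-7-4*b)/3 := by
  unfold F₁; omega

lemma count_bool (L : List Bool) : L.count true + L.count false = L.length := by
  induction L with
  | nil => simp
  | cons a L ih => cases a <;> simp [List.count_cons] <;> omega

lemma mem_M_iff (S : List Bool) (Fm : ℕ → ℕ) (hF : ∀ j, (S.take j).count true = Fm j)
    (k l j : ℕ) :
    j ∈ M S k l ↔ j + (k + l) ≤ S.length ∧ Fm (j + (k + l)) = Fm j + k := by
  have hsplit : Fm (j + (k + l)) = Fm j + ((S.drop j).take (k + l)).count true := by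
    rw [← hF, ← hF, List.take_add, List.count_append]
  simp only [M, Set.mem_setOf_eq]
  constructor
  · rintro ⟨h1, h2, h3⟩
    exact ⟨h1, by rw [hsplit, h2]⟩
  · rintro ⟨h1, h2⟩
    have hlen : ((S.drop j).take (k + l)).length = k + l := by
      rw [List.length_take, List.length_drop]; omega
    have hcb := count_bool ((S.drop j).take (k + l))
    exact ⟨h1, by omega, by omega⟩

lemma count_take_S₁ (b j : ℕ) : ((S₁ b).take j).count true = F₁ b j := by
  unfold S₁ F₁
  rw [List.take_append, List.take_append,
      List.take_append, List.take_append]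
  simp only [List.count_append, List.length_append, List.length_cons, List.length_nil, flat_len,
    count_take_lit6, count_take_lit01, flat_take_count, count_take_tail]

lemma count_take_S₂ (b j : ℕ) : ((S₂ b).take j).count true = F₂ b j := by
  unfold S₂ F₂
  rw [List.take_append, List.take_append,
      List.take_append, List.take_append]
  simp only [List.count_append, List.length_append, List.length_cons, List.length_nil, flat_len,
    count_take_lit6, count_take_lit10, flat_take_count, count_take_tail]

lemma key (b k l j : ℕ) (hb : 1 ≤ b)
    (h : (j + (k + l) ≤ 4*b+14 ∧ F₁ b (j + (k + l)) = F₁ b j + k) ∨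
         (j + (k + l) ≤ 4*b+14 ∧ F₂ b (j + (k + l)) = F₂ b j + k)) :
    ∃ c, (c + (k + l) ≤ 4*b+14 ∧ F₁ b (c + (k + l)) = F₁ b c + k) ∧
         (c + (k + l) ≤ 4*b+14 ∧ F₂ b (c + (k + l)) = F₂ b c + k) := by
  rcases h with ⟨ha, he⟩ | ⟨ha, he⟩
  · by_cases hj1 : j = 7+2*b
    · subst hj1
      have hm : k+l = 0 ∨ k+l = 1 ∨ (3 ≤ k+l ∧ k+l ≤ 2*b+1 ∧ (k+l) % 2 = 1) ∨ (2 ≤ k+l ∧ k+l ≤ 2*b ∧ (k+l) % 2 = 0) ∨ k+l = 2*b+2 ∨ k+l = 2*b+3 ∨ k+l = 2*b+4 ∨ k+l = 2*b+5 ∨ k+l = 2*b+6 ∨ k+l = 2*b+7 := by omega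
      rcases hm with hm|hm|hm|hm|hm|hm|hm|hm|hm|hm
      · -- k+l = 0
        obtain rfl : k = 0 := by omega
        obtain rfl : l = 0 := by omega
        exact ⟨0, ⟨by omega, by simp⟩, by omega, by simp⟩
      · -- k+l = 1
        rw [L2 b, L34 b (7+2*b+(k+l)) (by omega) (by omega)] at he
        refine ⟨0, ⟨by omega, ?_⟩, by omega, ?_⟩
        · rw [L01 b (0+(k+l)) (by omega), L01 b (0) (by omega)]; omega
        · rw [← Feq b (0+(k+l)) (by omega), ← Feq b (0) (by omega), L01 b (0+(k+l)) (by omega), L01 b (0) (by omega)]; omega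
      · -- 3 ≤ k+l ∧ k+l ≤ 2*b+1 ∧ (k+l) % 2 = 1
        rw [L2 b, L34 b (7+2*b+(k+l)) (by omega) (by omega)] at he
        refine ⟨6+2*b, ⟨by omega, ?_⟩, by omega, ?_⟩
        · rw [L34 b (6+2*b+(k+l)) (by omega) (by omega), L01 b (6+2*b) (by omega)]; omega
        · rw [← Feq b (6+2*b+(k+l)) (by omega), ← Feq b (6+2*b) (by omega), L34 b (6+2*b+(k+l)) (by omega) (by omega), L01 b (6+2*b) (by omega)]; omega
      · -- 2 ≤ k+l ∧ k+l ≤ 2*b ∧ (k+l) % 2 = 0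
        rw [L2 b, L34 b (7+2*b+(k+l)) (by omega) (by omega)] at he
        refine ⟨2, ⟨by omega, ?_⟩, by omega, ?_⟩
        · rw [L01 b (2+(k+l)) (by omega), L01 b (2) (by omega)]; omega
        · rw [← Feq b (2+(k+l)) (by omega), ← Feq b (2) (by omega), L01 b (2+(k+l)) (by omega), L01 b (2) (by omega)]; omega
      · -- k+l = 2*b+2
        rw [L2 b, L34 b (7+2*b+(k+l)) (by omega) (by omega)] at he
        refine ⟨6+2*b, ⟨by omega, ?_⟩, by omega, ?_⟩
        · rw [L34 b (6+2*b+(k+l)) (by omega) (by omega), L01 b (6+2*b) (by omega)]; omega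
        · rw [← Feq b (6+2*b+(k+l)) (by omega), ← Feq b (6+2*b) (by omega), L34 b (6+2*b+(k+l)) (by omega) (by omega), L01 b (6+2*b) (by omega)]; omega
      · -- k+l = 2*b+3
        rw [L2 b, L34 b (7+2*b+(k+l)) (by omega) (by omega)] at he
        refine ⟨3, ⟨by omega, ?_⟩, by omega, ?_⟩
        · rw [L01 b (3+(k+l)) (by omega), L01 b (3) (by omega)]; omega
        · rw [← Feq b (3+(k+l)) (by omega), ← Feq b (3) (by omega), L01 b (3+(k+l)) (by omega), L01 b (3) (by omega)]; omega
      · -- k+l = 2*b+4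
        rw [L2 b, L34 b (7+2*b+(k+l)) (by omega) (by omega)] at he
        refine ⟨6+2*b, ⟨by omega, ?_⟩, by omega, ?_⟩
        · rw [L34 b (6+2*b+(k+l)) (by omega) (by omega), L01 b (6+2*b) (by omega)]; omega
        · rw [← Feq b (6+2*b+(k+l)) (by omega), ← Feq b (6+2*b) (by omega), L34 b (6+2*b+(k+l)) (by omega) (by omega), L01 b (6+2*b) (by omega)]; omega
      · -- k+l = 2*b+5
        rw [L2 b, L34 b (7+2*b+(k+l)) (by omega) (by omega)] at he
        refine ⟨6+2*b, ⟨by omega, ?_⟩, by omega, ?_⟩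
        · rw [L34 b (6+2*b+(k+l)) (by omega) (by omega), L01 b (6+2*b) (by omega)]; omega
        · rw [← Feq b (6+2*b+(k+l)) (by omega), ← Feq b (6+2*b) (by omega), L34 b (6+2*b+(k+l)) (by omega) (by omega), L01 b (6+2*b) (by omega)]; omega
      · -- k+l = 2*b+6
        rw [L2 b, L34 b (7+2*b+(k+l)) (by omega) (by omega)] at he
        refine ⟨4, ⟨by omega, ?_⟩, by omega, ?_⟩
        · rw [L34 b (4+(k+l)) (by omega) (by omega), L01 b (4) (by omega)]; omega
        · rw [← Feq b (4+(k+l)) (by omega), ← Feq b (4) (by omega), L34 b (4+(k+l)) (by omega) (by omega), L01 b (4) (by omega)]; omega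
      · -- k+l = 2*b+7
        rw [L2 b, L34 b (7+2*b+(k+l)) (by omega) (by omega)] at he
        refine ⟨6+2*b, ⟨by omega, ?_⟩, by omega, ?_⟩
        · rw [L34 b (6+2*b+(k+l)) (by omega) (by omega), L01 b (6+2*b) (by omega)]; omega
        · rw [← Feq b (6+2*b+(k+l)) (by omega), ← Feq b (6+2*b) (by omega), L34 b (6+2*b+(k+l)) (by omega) (by omega), L01 b (6+2*b) (by omega)]; omega
    · by_cases hj2 : j + (k + l) = 7+2*b
      ·
        have hm : k+l = 0 ∨ k+l = 1 ∨ (3 ≤ k+l ∧ k+l ≤ 2*b-1 ∧ (k+l) % 2 = 1) ∨ (2 ≤ k+l ∧ k+l ≤ 2*b ∧ (k+l) % 2 = 0) ∨ k+l = 2*b+1 ∨ k+l = 2*b+2 ∨ k+l = 2*b+3 ∨ k+l = 2*b+4 ∨ k+l = 2*b+5 ∨ k+l = 2*b+6 ∨ k+l = 2*b+7 := by omega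
        rcases hm with hm|hm|hm|hm|hm|hm|hm|hm|hm|hm|hm
        · -- k+l = 0
          obtain rfl : k = 0 := by omega
          obtain rfl : l = 0 := by omega
          exact ⟨0, ⟨by omega, by simp⟩, by omega, by simp⟩
        · -- k+l = 1
          rw [hj2] at he
          rw [L2 b, L01 b j (by omega)] at he
          refine ⟨1, ⟨by omega, ?_⟩, by omega, ?_⟩
          · rw [L01 b (1+(k+l)) (by omega), L01 b (1) (by omega)]; omega
          · rw [← Feq b (1+(k+l)) (by omega), ← Feq b (1) (by omega), L01 b (1+(k+l)) (by omega), L01 b (1) (by omega)]; omega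
        · -- 3 ≤ k+l ∧ k+l ≤ 2*b-1 ∧ (k+l) % 2 = 1
          rw [hj2] at he
          rw [L2 b, L01 b j (by omega)] at he
          refine ⟨j-1, ⟨by omega, ?_⟩, by omega, ?_⟩
          · rw [L01 b (j-1+(k+l)) (by omega), L01 b (j-1) (by omega)]; omega
          · rw [← Feq b (j-1+(k+l)) (by omega), ← Feq b (j-1) (by omega), L01 b (j-1+(k+l)) (by omega), L01 b (j-1) (by omega)]; omega
        · -- 2 ≤ k+l ∧ k+l ≤ 2*b ∧ (k+l) % 2 = 0
          rw [hj2] at he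
          rw [L2 b, L01 b j (by omega)] at he
          refine ⟨12+4*b-(k+l), ⟨by omega, ?_⟩, by omega, ?_⟩
          · rw [L34 b ((12+4*b-(k+l))+(k+l)) (by omega) (by omega), L34 b (12+4*b-(k+l)) (by omega) (by omega)]; omega
          · rw [← Feq b ((12+4*b-(k+l))+(k+l)) (by omega), ← Feq b (12+4*b-(k+l)) (by omega), L34 b ((12+4*b-(k+l))+(k+l)) (by omega) (by omega), L34 b (12+4*b-(k+l)) (by omega) (by omega)]; omega
        · -- k+l = 2*b+1
          rw [hj2] at he
          rw [L2 b, L01 b j (by omega)] at he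
          refine ⟨j+1, ⟨by omega, ?_⟩, by omega, ?_⟩
          · rw [L34 b (j+1+(k+l)) (by omega) (by omega), L01 b (j+1) (by omega)]; omega
          · rw [← Feq b (j+1+(k+l)) (by omega), ← Feq b (j+1) (by omega), L34 b (j+1+(k+l)) (by omega) (by omega), L01 b (j+1) (by omega)]; omega
        · -- k+l = 2*b+2
          rw [hj2] at he
          rw [L2 b, L01 b j (by omega)] at he
          refine ⟨j-1, ⟨by omega, ?_⟩, by omega, ?_⟩
          · rw [L01 b (j-1+(k+l)) (by omega), L01 b (j-1) (by omega)]; omega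
          · rw [← Feq b (j-1+(k+l)) (by omega), ← Feq b (j-1) (by omega), L01 b (j-1+(k+l)) (by omega), L01 b (j-1) (by omega)]; omega
        · -- k+l = 2*b+3
          rw [hj2] at he
          rw [L2 b, L01 b j (by omega)] at he
          refine ⟨8+2*b, ⟨by omega, ?_⟩, by omega, ?_⟩
          · rw [L34 b (8+2*b+(k+l)) (by omega) (by omega), L34 b (8+2*b) (by omega) (by omega)]; omega
          · rw [← Feq b (8+2*b+(k+l)) (by omega), ← Feq b (8+2*b) (by omega), L34 b (8+2*b+(k+l)) (by omega) (by omega), L34 b (8+2*b) (by omega) (by omega)]; omega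
        · -- k+l = 2*b+4
          rw [hj2] at he
          rw [L2 b, L01 b j (by omega)] at he
          refine ⟨j+1, ⟨by omega, ?_⟩, by omega, ?_⟩
          · rw [L34 b (j+1+(k+l)) (by omega) (by omega), L01 b (j+1) (by omega)]; omega
          · rw [← Feq b (j+1+(k+l)) (by omega), ← Feq b (j+1) (by omega), L34 b (j+1+(k+l)) (by omega) (by omega), L01 b (j+1) (by omega)]; omega
        · -- k+l = 2*b+5
          rw [hj2] at he
          rw [L2 b, L01 b j (by omega)] at he
          refine ⟨j-1, ⟨by omega, ?_⟩, by omega, ?_⟩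
          · rw [L01 b (j-1+(k+l)) (by omega), L01 b (j-1) (by omega)]; omega
          · rw [← Feq b (j-1+(k+l)) (by omega), ← Feq b (j-1) (by omega), L01 b (j-1+(k+l)) (by omega), L01 b (j-1) (by omega)]; omega
        · -- k+l = 2*b+6
          rw [hj2] at he
          rw [L2 b, L01 b j (by omega)] at he
          refine ⟨4, ⟨by omega, ?_⟩, by omega, ?_⟩
          · rw [L34 b (4+(k+l)) (by omega) (by omega), L01 b (4) (by omega)]; omega
          · rw [← Feq b (4+(k+l)) (by omega), ← Feq b (4) (by omega), L34 b (4+(k+l)) (by omega) (by omega), L01 b (4) (by omega)]; omega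
        · -- k+l = 2*b+7
          rw [hj2] at he
          rw [L2 b, L01 b j (by omega)] at he
          refine ⟨1, ⟨by omega, ?_⟩, by omega, ?_⟩
          · rw [L34 b (1+(k+l)) (by omega) (by omega), L01 b (1) (by omega)]; omega
          · rw [← Feq b (1+(k+l)) (by omega), ← Feq b (1) (by omega), L34 b (1+(k+l)) (by omega) (by omega), L01 b (1) (by omega)]; omega
      · exact ⟨j, ⟨ha, he⟩, ⟨ha, by rw [← Feq b (j+(k+l)) hj2, ← Feq b j hj1]; exact he⟩⟩
  · by_cases hj1 : j = 7+2*b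
    · subst hj1
      have hm : k+l = 0 ∨ k+l = 1 ∨ (3 ≤ k+l ∧ k+l ≤ 2*b+1 ∧ (k+l) % 2 = 1) ∨ (2 ≤ k+l ∧ k+l ≤ 2*b ∧ (k+l) % 2 = 0) ∨ k+l = 2*b+2 ∨ k+l = 2*b+3 ∨ k+l = 2*b+4 ∨ k+l = 2*b+5 ∨ k+l = 2*b+6 ∨ k+l = 2*b+7 := by omega
      rcases hm with hm|hm|hm|hm|hm|hm|hm|hm|hm|hm
      · -- k+l = 0
        obtain rfl : k = 0 := by omega
        obtain rfl : l = 0 := by omega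
        exact ⟨0, ⟨by omega, by simp⟩, by omega, by simp⟩
      · -- k+l = 1
        rw [L2' b, ← Feq b (7+2*b+(k+l)) (by omega), L34 b (7+2*b+(k+l)) (by omega) (by omega)] at he
        refine ⟨1, ⟨by omega, ?_⟩, by omega, ?_⟩
        · rw [L01 b (1+(k+l)) (by omega), L01 b (1) (by omega)]; omega
        · rw [← Feq b (1+(k+l)) (by omega), ← Feq b (1) (by omega), L01 b (1+(k+l)) (by omega), L01 b (1) (by omega)]; omega
      · -- 3 ≤ k+l ∧ k+l ≤ 2*b+1 ∧ (k+l) % 2 = 1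
        rw [L2' b, ← Feq b (7+2*b+(k+l)) (by omega), L34 b (7+2*b+(k+l)) (by omega) (by omega)] at he
        refine ⟨9+2*b, ⟨by omega, ?_⟩, by omega, ?_⟩
        · rw [L34 b (9+2*b+(k+l)) (by omega) (by omega), L34 b (9+2*b) (by omega) (by omega)]; omega
        · rw [← Feq b (9+2*b+(k+l)) (by omega), ← Feq b (9+2*b) (by omega), L34 b (9+2*b+(k+l)) (by omega) (by omega), L34 b (9+2*b) (by omega) (by omega)]; omega
      · -- 2 ≤ k+l ∧ k+l ≤ 2*b ∧ (k+l) % 2 = 0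
        rw [L2' b, ← Feq b (7+2*b+(k+l)) (by omega), L34 b (7+2*b+(k+l)) (by omega) (by omega)] at he
        refine ⟨8+2*b, ⟨by omega, ?_⟩, by omega, ?_⟩
        · rw [L34 b (8+2*b+(k+l)) (by omega) (by omega), L34 b (8+2*b) (by omega) (by omega)]; omega
        · rw [← Feq b (8+2*b+(k+l)) (by omega), ← Feq b (8+2*b) (by omega), L34 b (8+2*b+(k+l)) (by omega) (by omega), L34 b (8+2*b) (by omega) (by omega)]; omega
      · -- k+l = 2*b+2
        rw [L2' b, ← Feq b (7+2*b+(k+l)) (by omega), L34 b (7+2*b+(k+l)) (by omega) (by omega)] at he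
        refine ⟨9+2*b, ⟨by omega, ?_⟩, by omega, ?_⟩
        · rw [L34 b (9+2*b+(k+l)) (by omega) (by omega), L34 b (9+2*b) (by omega) (by omega)]; omega
        · rw [← Feq b (9+2*b+(k+l)) (by omega), ← Feq b (9+2*b) (by omega), L34 b (9+2*b+(k+l)) (by omega) (by omega), L34 b (9+2*b) (by omega) (by omega)]; omega
      · -- k+l = 2*b+3
        rw [L2' b, ← Feq b (7+2*b+(k+l)) (by omega), L34 b (7+2*b+(k+l)) (by omega) (by omega)] at he
        refine ⟨6+2*b, ⟨by omega, ?_⟩, by omega, ?_⟩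
        · rw [L34 b (6+2*b+(k+l)) (by omega) (by omega), L01 b (6+2*b) (by omega)]; omega
        · rw [← Feq b (6+2*b+(k+l)) (by omega), ← Feq b (6+2*b) (by omega), L34 b (6+2*b+(k+l)) (by omega) (by omega), L01 b (6+2*b) (by omega)]; omega
      · -- k+l = 2*b+4
        rw [L2' b, ← Feq b (7+2*b+(k+l)) (by omega), L34 b (7+2*b+(k+l)) (by omega) (by omega)] at he
        refine ⟨8+2*b, ⟨by omega, ?_⟩, by omega, ?_⟩
        · rw [L34 b (8+2*b+(k+l)) (by omega) (by omega), L34 b (8+2*b) (by omega) (by omega)]; omega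
        · rw [← Feq b (8+2*b+(k+l)) (by omega), ← Feq b (8+2*b) (by omega), L34 b (8+2*b+(k+l)) (by omega) (by omega), L34 b (8+2*b) (by omega) (by omega)]; omega
      · -- k+l = 2*b+5
        rw [L2' b, ← Feq b (7+2*b+(k+l)) (by omega), L34 b (7+2*b+(k+l)) (by omega) (by omega)] at he
        refine ⟨9+2*b, ⟨by omega, ?_⟩, by omega, ?_⟩
        · rw [L34 b (9+2*b+(k+l)) (by omega) (by omega), L34 b (9+2*b) (by omega) (by omega)]; omega
        · rw [← Feq b (9+2*b+(k+l)) (by omega), ← Feq b (9+2*b) (by omega), L34 b (9+2*b+(k+l)) (by omega) (by omega), L34 b (9+2*b) (by omega) (by omega)]; omega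
      · -- k+l = 2*b+6
        rw [L2' b, ← Feq b (7+2*b+(k+l)) (by omega), L34 b (7+2*b+(k+l)) (by omega) (by omega)] at he
        refine ⟨6+2*b, ⟨by omega, ?_⟩, by omega, ?_⟩
        · rw [L34 b (6+2*b+(k+l)) (by omega) (by omega), L01 b (6+2*b) (by omega)]; omega
        · rw [← Feq b (6+2*b+(k+l)) (by omega), ← Feq b (6+2*b) (by omega), L34 b (6+2*b+(k+l)) (by omega) (by omega), L01 b (6+2*b) (by omega)]; omega
      · -- k+l = 2*b+7
        rw [L2' b, ← Feq b (7+2*b+(k+l)) (by omega), L34 b (7+2*b+(k+l)) (by omega) (by omega)] at he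
        refine ⟨5+2*b, ⟨by omega, ?_⟩, by omega, ?_⟩
        · rw [L34 b (5+2*b+(k+l)) (by omega) (by omega), L01 b (5+2*b) (by omega)]; omega
        · rw [← Feq b (5+2*b+(k+l)) (by omega), ← Feq b (5+2*b) (by omega), L34 b (5+2*b+(k+l)) (by omega) (by omega), L01 b (5+2*b) (by omega)]; omega
    · by_cases hj2 : j + (k + l) = 7+2*b
      ·
        have hm : k+l = 0 ∨ k+l = 1 ∨ (3 ≤ k+l ∧ k+l ≤ 2*b+3 ∧ (k+l) % 2 = 1) ∨ (2 ≤ k+l ∧ k+l ≤ 2*b ∧ (k+l) % 2 = 0) ∨ k+l = 2*b+2 ∨ k+l = 2*b+4 ∨ k+l = 2*b+5 ∨ k+l = 2*b+6 ∨ k+l = 2*b+7 := by omega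
        rcases hm with hm|hm|hm|hm|hm|hm|hm|hm|hm
        · -- k+l = 0
          obtain rfl : k = 0 := by omega
          obtain rfl : l = 0 := by omega
          exact ⟨0, ⟨by omega, by simp⟩, by omega, by simp⟩
        · -- k+l = 1
          rw [hj2] at he
          rw [L2' b, ← Feq b j (by omega), L01 b j (by omega)] at he
          refine ⟨0, ⟨by omega, ?_⟩, by omega, ?_⟩
          · rw [L01 b (0+(k+l)) (by omega), L01 b (0) (by omega)]; omega
          · rw [← Feq b (0+(k+l)) (by omega), ← Feq b (0) (by omega), L01 b (0+(k+l)) (by omega), L01 b (0) (by omega)]; omega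
        · -- 3 ≤ k+l ∧ k+l ≤ 2*b+3 ∧ (k+l) % 2 = 1
          rw [hj2] at he
          rw [L2' b, ← Feq b j (by omega), L01 b j (by omega)] at he
          refine ⟨3, ⟨by omega, ?_⟩, by omega, ?_⟩
          · rw [L01 b (3+(k+l)) (by omega), L01 b (3) (by omega)]; omega
          · rw [← Feq b (3+(k+l)) (by omega), ← Feq b (3) (by omega), L01 b (3+(k+l)) (by omega), L01 b (3) (by omega)]; omega
        · -- 2 ≤ k+l ∧ k+l ≤ 2*b ∧ (k+l) % 2 = 0
          rw [hj2] at he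
          rw [L2' b, ← Feq b j (by omega), L01 b j (by omega)] at he
          refine ⟨j-1, ⟨by omega, ?_⟩, by omega, ?_⟩
          · rw [L01 b (j-1+(k+l)) (by omega), L01 b (j-1) (by omega)]; omega
          · rw [← Feq b (j-1+(k+l)) (by omega), ← Feq b (j-1) (by omega), L01 b (j-1+(k+l)) (by omega), L01 b (j-1) (by omega)]; omega
        · -- k+l = 2*b+2
          rw [hj2] at he
          rw [L2' b, ← Feq b j (by omega), L01 b j (by omega)] at he
          refine ⟨3, ⟨by omega, ?_⟩, by omega, ?_⟩
          · rw [L01 b (3+(k+l)) (by omega), L01 b (3) (by omega)]; omega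
          · rw [← Feq b (3+(k+l)) (by omega), ← Feq b (3) (by omega), L01 b (3+(k+l)) (by omega), L01 b (3) (by omega)]; omega
        · -- k+l = 2*b+4
          rw [hj2] at he
          rw [L2' b, ← Feq b j (by omega), L01 b j (by omega)] at he
          refine ⟨2, ⟨by omega, ?_⟩, by omega, ?_⟩
          · rw [L01 b (2+(k+l)) (by omega), L01 b (2) (by omega)]; omega
          · rw [← Feq b (2+(k+l)) (by omega), ← Feq b (2) (by omega), L01 b (2+(k+l)) (by omega), L01 b (2) (by omega)]; omega
        · -- k+l = 2*b+5
          rw [hj2] at he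
          rw [L2' b, ← Feq b j (by omega), L01 b j (by omega)] at he
          refine ⟨0, ⟨by omega, ?_⟩, by omega, ?_⟩
          · rw [L01 b (0+(k+l)) (by omega), L01 b (0) (by omega)]; omega
          · rw [← Feq b (0+(k+l)) (by omega), ← Feq b (0) (by omega), L01 b (0+(k+l)) (by omega), L01 b (0) (by omega)]; omega
        · -- k+l = 2*b+6
          rw [hj2] at he
          rw [L2' b, ← Feq b j (by omega), L01 b j (by omega)] at he
          refine ⟨0, ⟨by omega, ?_⟩, by omega, ?_⟩
          · rw [L01 b (0+(k+l)) (by omega), L01 b (0) (by omega)]; omega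
          · rw [← Feq b (0+(k+l)) (by omega), ← Feq b (0) (by omega), L01 b (0+(k+l)) (by omega), L01 b (0) (by omega)]; omega
        · -- k+l = 2*b+7
          rw [hj2] at he
          rw [L2' b, ← Feq b j (by omega), L01 b j (by omega)] at he
          refine ⟨2, ⟨by omega, ?_⟩, by omega, ?_⟩
          · rw [L34 b (2+(k+l)) (by omega) (by omega), L01 b (2) (by omega)]; omega
          · rw [← Feq b (2+(k+l)) (by omega), ← Feq b (2) (by omega), L34 b (2+(k+l)) (by omega) (by omega), L01 b (2) (by omega)]; omega
      · exact ⟨j, ⟨ha, by rw [Feq b j hj1, Feq b (j+(k+l)) hj2]; exact he⟩, ⟨ha, he⟩⟩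

/-- **Theorem 13.** For every `b ≥ 1` and every Parikh vector `(k,l)`, either both
`S₁` and `S₂` have no substring with `k` ones and `l` zeros, or they have a common
starting position of such a substring. Hence `S₁` and `S₂` cannot be distinguished
by adversarial jumbled-indexing queries. -/
theorem aji_indistinguishable (b : ℕ) (hb : 1 ≤ b) (k l : ℕ) :
    (M (S₁ b) k l = ∅ ∧ M (S₂ b) k l = ∅) ∨ (M (S₁ b) k l ∩ M (S₂ b) k l).Nonempty := by
  have m1 : ∀ j, j ∈ M (S₁ b) k l ↔ (j + (k + l) ≤ 4*b+14 ∧ F₁ b (j + (k + l)) = F₁ b j + k) := by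
    intro j
    rw [mem_M_iff (S₁ b) (F₁ b) (count_take_S₁ b) k l j, len_S₁]
  have m2 : ∀ j, j ∈ M (S₂ b) k l ↔ (j + (k + l) ≤ 4*b+14 ∧ F₂ b (j + (k + l)) = F₂ b j + k) := by
    intro j
    rw [mem_M_iff (S₂ b) (F₂ b) (count_take_S₂ b) k l j, len_S₂]
  rcases (M (S₁ b) k l).eq_empty_or_nonempty with h1 | ⟨j, hj⟩
  · rcases (M (S₂ b) k l).eq_empty_or_nonempty with h2 | ⟨j, hj⟩
    · exact Or.inl ⟨h1, h2⟩
    · obtain ⟨c, hc1, hc2⟩ := key b k l j hb (Or.inr ((m2 j).mp hj))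
      exact Or.inr ⟨c, (m1 c).mpr hc1, (m2 c).mpr hc2⟩
  · obtain ⟨c, hc1, hc2⟩ := key b k l j hb (Or.inl ((m1 j).mp hj))
    exact Or.inr ⟨c, (m1 c).mpr hc1, (m2 c).mpr hc2⟩
end
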